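/- Let R be a compact Hausdorff topological ring, let f and v be central elements of R with q := f·v, assume f^k + v^k is a unit of R for every integer k ≥ 1, and assume ∩_{k≥1} q^k R = {0}. Then there exists a central idempotent e ∈ R such that e·R = ∩_{k≥1} f^k R and (1−e)·R = ∩_{k≥1} v^k R; in particular R decomposes as the direct sum of the two-sided ideals 𝔉 := ∩_{k≥1} f^k R and 𝔙 := ∩_{k≥1} v^k R, and 𝔉 · 𝔙 = 0. -/

import Mathlib

/-- Let `R` be a compact Hausdorff topological ring, `f, v` central elements with
`q = f·v`, suppose `f^k + v^k` is a unit for all `k ≥ 1` and `⋂_{k≥1} q^k R = 0`.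
Then there is a central idempotent `e` with `e·R = ⋂_{k≥1} f^k R =: 𝔉` and
`(1-e)·R = ⋂_{k≥1} v^k R =: 𝔙`; in particular `R = 𝔉 ⊕ 𝔙` (every element is a sum of an
element of `𝔉` and one of `𝔙`) and `𝔉 · 𝔙 = 0`. -/
theorem stmt_10 (R : Type*) [Ring R] [TopologicalSpace R] [IsTopologicalRing R]
    [CompactSpace R] [T2Space R]
    (f v : R) (hf : ∀ r : R, f * r = r * f) (hv : ∀ r : R, v * r = r * v)
    (hu : ∀ k : ℕ, 1 ≤ k → IsUnit (f ^ k + v ^ k))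
    (hq : ∀ z : R, (∀ k : ℕ, 1 ≤ k → ∃ r : R, z = (f * v) ^ k * r) → z = 0) :
    ∃ e : R, e * e = e ∧ (∀ r : R, e * r = r * e) ∧
      ({z : R | ∃ r : R, z = e * r} = {z : R | ∀ k : ℕ, 1 ≤ k → ∃ r : R, z = f ^ k * r}) ∧
      ({z : R | ∃ r : R, z = (1 - e) * r} =
        {z : R | ∀ k : ℕ, 1 ≤ k → ∃ r : R, z = v ^ k * r}) ∧
      -- `R` is the (direct) sum of the two ideals `𝔉` and `𝔙`
      (∀ z : R, ∃ x y : R, (∀ k : ℕ, 1 ≤ k → ∃ r : R, x = f ^ k * r) ∧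
        (∀ k : ℕ, 1 ≤ k → ∃ r : R, y = v ^ k * r) ∧ z = x + y) ∧
      -- `𝔉 · 𝔙 = 0`
      (∀ x y : R, (∀ k : ℕ, 1 ≤ k → ∃ r : R, x = f ^ k * r) →
        (∀ k : ℕ, 1 ≤ k → ∃ r : R, y = v ^ k * r) → x * y = 0) := by
  classical
  -- centrality helpers
  have hfp : ∀ (k : ℕ) (r : R), f ^ k * r = r * f ^ k := fun k r =>
    ((Commute.pow_left (hf r) k) : Commute (f ^ k) r)
  have hvp : ∀ (k : ℕ) (r : R), v ^ k * r = r * v ^ k := fun k r =>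
    ((Commute.pow_left (hv r) k) : Commute (v ^ k) r)
  have hfvk : ∀ k : ℕ, (f * v) ^ k = f ^ k * v ^ k :=
    fun k => (Commute.mul_pow (hf v) k)
  have hvfk : ∀ k : ℕ, (f * v) ^ k = v ^ k * f ^ k := fun k => by
    rw [hf v]; exact Commute.mul_pow (hv f) k
  have hqc : ∀ (k : ℕ) (r : R), (f * v) ^ k * r = r * (f * v) ^ k := fun k r =>
    ((Commute.pow_left (Commute.mul_left (hf r) (hv r)) k) : Commute ((f * v) ^ k) r)
  -- general product lemma : (f^k r)(v^k s) = (f v)^k (r s)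
  have hprod : ∀ (k : ℕ) (r s : R), (f ^ k * r) * (v ^ k * s) = (f * v) ^ k * (r * s) := by
    intro k r s
    have h1 : r * (v ^ k * s) = v ^ k * (r * s) := by rw [← mul_assoc, ← hvp, mul_assoc]
    calc (f ^ k * r) * (v ^ k * s) = f ^ k * (r * (v ^ k * s)) := mul_assoc _ _ _
      _ = f ^ k * (v ^ k * (r * s)) := by rw [h1]
      _ = (f ^ k * v ^ k) * (r * s) := (mul_assoc _ _ _).symm
      _ = (f * v) ^ k * (r * s) := by rw [hfvk]
  have hprodvf : ∀ (k : ℕ) (r s : R), (v ^ k * r) * (f ^ k * s) = (f * v) ^ k * (r * s) := by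
    intro k r s
    have h1 : r * (f ^ k * s) = f ^ k * (r * s) := by rw [← mul_assoc, ← hfp, mul_assoc]
    calc (v ^ k * r) * (f ^ k * s) = v ^ k * (r * (f ^ k * s)) := mul_assoc _ _ _
      _ = v ^ k * (f ^ k * (r * s)) := by rw [h1]
      _ = (v ^ k * f ^ k) * (r * s) := (mul_assoc _ _ _).symm
      _ = (f * v) ^ k * (r * s) := by rw [hvfk]
  -- membership in center
  have hfC : f ∈ Subring.center R := Subring.mem_center_iff.mpr fun g => (hf g).symm
  have hvC : v ∈ Subring.center R := Subring.mem_center_iff.mpr fun g => (hv g).symm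
  -- choose central inverses of f^(n+1) + v^(n+1)
  have hwex : ∀ n : ℕ, ∃ w : R, w ∈ Subring.center R ∧
      (f ^ (n+1) + v ^ (n+1)) * w = 1 ∧ w * (f ^ (n+1) + v ^ (n+1)) = 1 := by
    intro n
    obtain ⟨u, huu⟩ := hu (n+1) (Nat.le_add_left 1 n)
    set s : R := f ^ (n+1) + v ^ (n+1) with hs
    have hsc : ∀ r : R, s * r = r * s := by
      intro r; rw [hs, add_mul, mul_add, hfp, hvp]
    have h1 : s * ↑u⁻¹ = 1 := by rw [← huu]; exact u.mul_inv
    have h2 : (↑u⁻¹ : R) * s = 1 := by rw [← huu]; exact u.inv_mul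
    refine ⟨↑u⁻¹, Subring.mem_center_iff.mpr fun g => ?_, h1, h2⟩
    calc g * ↑u⁻¹ = (↑u⁻¹ * s) * (g * ↑u⁻¹) := by rw [h2, one_mul]
      _ = ↑u⁻¹ * ((s * g) * ↑u⁻¹) := by rw [mul_assoc, ← mul_assoc s]
      _ = ↑u⁻¹ * ((g * s) * ↑u⁻¹) := by rw [hsc g]
      _ = ↑u⁻¹ * (g * (s * ↑u⁻¹)) := by rw [mul_assoc g]
      _ = ↑u⁻¹ * g := by rw [h1, mul_one]
  choose w hwC hw1 _hw2 using hwex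
  -- elements of the commutative ring `Subring.center R`
  set C := Subring.center R with hCdef
  let F : C := ⟨f, hfC⟩
  let V : C := ⟨v, hvC⟩
  let W : ℕ → C := fun n => ⟨w n, hwC n⟩
  let A : ℕ → C := fun n => F ^ (n+1) * W n
  have hWinv : ∀ n : ℕ, (F ^ (n+1) + V ^ (n+1)) * W n = 1 := by
    intro n
    apply Subtype.ext
    push_cast
    exact hw1 n
  have hdiff : ∀ n : ℕ,
      (A (n+1) : C) - A n = (F * V) ^ (n+1) * ((F - V) * (W n * W (n+1))) := by
    intro n
    have h1 := hWinv n
    have h2 := hWinv (n+1)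
    show F ^ (n+2) * W (n+1) - F ^ (n+1) * W n = _
    linear_combination (F^(n+1) * W n) * h2 - (F^(n+2) * W (n+1)) * h1
  have hone : ∀ n : ℕ, (1 : C) - A n = V ^ (n+1) * W n := by
    intro n
    have h := hWinv n
    show (1 : C) - F ^ (n+1) * W n = _
    linear_combination -h
  -- push to R
  have hAval : ∀ n : ℕ, (A n : R) = f ^ (n+1) * w n := fun n => rfl
  have hdiffR : ∀ n : ℕ, (A (n+1) : R) - A n
      = (f * v) ^ (n+1) * ((f - v) * (w n * w (n+1))) := by
    intro n
    have := congrArg (Subtype.val) (hdiff n)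
    push_cast at this
    exact this
  have honeR : ∀ n : ℕ, (1 : R) - A n = v ^ (n+1) * w n := by
    intro n
    have := congrArg (Subtype.val) (hone n)
    push_cast at this
    exact this
  have hAc : ∀ (n : ℕ) (r : R), (A n : R) * r = r * (A n : R) := fun n r =>
    (Subring.mem_center_iff.mp (A n).2 r).symm
  have key : ∀ n : ℕ,
      (A (n+1) : R) = (A n : R) + (f * v) ^ (n+1) * ((f - v) * (w n * w (n+1))) := by
    intro n
    rw [← hdiffR n]
    abel
  -- the nested compact sets
  let S : ℕ → Set R := fun n => (fun r => (A n : R) + (f * v) ^ (n+1) * r) '' Set.univ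
  have hScompact : ∀ n, IsCompact (S n) := by
    intro n
    exact isCompact_univ.image (continuous_const.add (continuous_const.mul continuous_id))
  have hSclosed : ∀ n, IsClosed (S n) := fun n => (hScompact n).isClosed
  have hSnonempty : ∀ n, (S n).Nonempty := by
    intro n
    exact ⟨(A n : R), 0, trivial, by simp⟩
  have hSnested : ∀ n, S (n+1) ⊆ S n := by
    intro n x hx
    obtain ⟨r, -, hr⟩ := hx
    simp only at hr
    refine ⟨(f - v) * (w n * w (n+1)) + f * v * r, trivial, ?_⟩
    show (A n : R) + (f * v) ^ (n+1) * ((f - v) * (w n * w (n+1)) + f * v * r) = x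
    rw [← hr, mul_add, ← add_assoc, ← key n, ← mul_assoc, ← pow_succ]
  obtain ⟨e, he⟩ := IsCompact.nonempty_iInter_of_sequence_nonempty_isCompact_isClosed S
    hSnested hSnonempty (hScompact 0) hSclosed
  have heS : ∀ n : ℕ, ∃ s : R, e = (A n : R) + (f * v) ^ (n+1) * s := by
    intro n
    have : e ∈ S n := Set.mem_iInter.mp he n
    obtain ⟨s, -, hs⟩ := this
    exact ⟨s, hs.symm⟩
  -- convert hq to shifted indexing
  have hq' : ∀ z : R, (∀ n : ℕ, ∃ r : R, z = (f * v) ^ (n+1) * r) → z = 0 := by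
    intro z h
    refine hq z fun k hk => ?_
    obtain ⟨m, rfl⟩ : ∃ m, k = m + 1 := ⟨k - 1, by omega⟩
    exact h m
  -- e lies in every f^k R
  have hef : ∀ k : ℕ, 1 ≤ k → ∃ t : R, e = f ^ k * t := by
    intro k hk
    obtain ⟨m, rfl⟩ : ∃ m, k = m + 1 := ⟨k - 1, by omega⟩
    obtain ⟨s, hs⟩ := heS m
    refine ⟨w m + v ^ (m+1) * s, ?_⟩
    rw [hs, hAval, mul_add, ← mul_assoc, ← hfvk]
  -- 1 - e lies in every v^k R
  have hev : ∀ k : ℕ, 1 ≤ k → ∃ t : R, 1 - e = v ^ k * t := by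
    intro k hk
    obtain ⟨m, rfl⟩ : ∃ m, k = m + 1 := ⟨k - 1, by omega⟩
    obtain ⟨s, hs⟩ := heS m
    refine ⟨w m - f ^ (m+1) * s, ?_⟩
    rw [hs, mul_sub, ← mul_assoc (v ^ (m+1)), ← hvfk, ← honeR m]
    abel
  -- centrality of e
  have heC : ∀ r : R, e * r = r * e := by
    intro r
    have h0 : e * r - r * e = 0 := by
      refine hq' (e * r - r * e) fun n => ?_
      obtain ⟨s, hs⟩ := heS n
      refine ⟨s * r - r * s, ?_⟩
      rw [hs]
      have h1 : r * ((f * v) ^ (n+1) * s) = (f * v) ^ (n+1) * (r * s) := by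
        rw [← mul_assoc, ← hqc, mul_assoc]
      rw [add_mul, mul_add, ← hAc n r, h1, mul_assoc, mul_sub]
      abel
    exact sub_eq_zero.mp h0
  -- 𝔉 ⬝ 𝔙 = 0
  have hFV : ∀ x y : R, (∀ k : ℕ, 1 ≤ k → ∃ r : R, x = f ^ k * r) →
      (∀ k : ℕ, 1 ≤ k → ∃ r : R, y = v ^ k * r) → x * y = 0 := by
    intro x y hx hy
    refine hq' (x * y) fun n => ?_
    obtain ⟨r, hr⟩ := hx (n+1) (Nat.le_add_left 1 n)
    obtain ⟨s, hs⟩ := hy (n+1) (Nat.le_add_left 1 n)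
    exact ⟨r * s, by rw [hr, hs, hprod]⟩
  have hVF : ∀ x y : R, (∀ k : ℕ, 1 ≤ k → ∃ r : R, x = v ^ k * r) →
      (∀ k : ℕ, 1 ≤ k → ∃ r : R, y = f ^ k * r) → x * y = 0 := by
    intro x y hx hy
    refine hq' (x * y) fun n => ?_
    obtain ⟨r, hr⟩ := hx (n+1) (Nat.le_add_left 1 n)
    obtain ⟨s, hs⟩ := hy (n+1) (Nat.le_add_left 1 n)
    exact ⟨r * s, by rw [hr, hs, hprodvf]⟩
  -- e is idempotent
  have he1e : e * (1 - e) = 0 := hFV e (1 - e) hef hev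
  have hidem : e * e = e := by
    have h0 : e * 1 - e * e = 0 := by rw [← mul_sub]; exact he1e
    rw [mul_one] at h0
    exact (sub_eq_zero.mp h0).symm
  refine ⟨e, hidem, heC, ?_, ?_, ?_, hFV⟩
  · ext z
    simp only [Set.mem_setOf_eq]
    constructor
    · rintro ⟨r, rfl⟩ k hk
      obtain ⟨t, ht⟩ := hef k hk
      exact ⟨t * r, by rw [ht, mul_assoc]⟩
    · intro hz
      have h0 : (1 - e) * z = 0 := hVF (1 - e) z hev hz
      refine ⟨z, ?_⟩
      have hzz : z = e * z + (1 - e) * z := by rw [sub_mul, one_mul]; abel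
      rw [h0, add_zero] at hzz
      exact hzz
  · ext z
    simp only [Set.mem_setOf_eq]
    constructor
    · rintro ⟨r, rfl⟩ k hk
      obtain ⟨t, ht⟩ := hev k hk
      exact ⟨t * r, by rw [ht, mul_assoc]⟩
    · intro hz
      have h0 : e * z = 0 := hFV e z hef hz
      refine ⟨z, ?_⟩
      have hzz : z = e * z + (1 - e) * z := by rw [sub_mul, one_mul]; abel
      rw [h0, zero_add] at hzz
      exact hzz
  · intro z
    refine ⟨e * z, (1 - e) * z, ?_, ?_, by rw [sub_mul, one_mul]; abel⟩
    · intro k hk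
      obtain ⟨t, ht⟩ := hef k hk
      exact ⟨t * z, by rw [ht, mul_assoc]⟩
    · intro k hk
      obtain ⟨t, ht⟩ := hev k hk
      exact ⟨t * z, by rw [ht, mul_assoc]⟩
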